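/- arXiv:2412.17914 — 6 statements merged into one kernel-verified Lean document; each statement's English description precedes it below -/
import Mathlib

section
/- If g is a non-abelian finite-dimensional complex Lie algebra, the 2-cocycle c((m,g),(m',g')) = (0,[m,m']) on g⋊g with adjoint values is not a coboundary; in particular H^2(g⋊g, g⋊g) ≠ 0. -/
/-- The bracket of the semi-direct product Lie algebra `g ⋊ g`. -/
def semidirectBracket {g : Type*} [LieRing g] [LieAlgebra ℂ g]
    (x y : g × g) : g × g :=
  (⁅x.2, y.1⁆ - ⁅y.2, x.1⁆, ⁅x.2, y.2⁆)

/-- The 2-cocycle `c((m,g),(m',g')) = (0, [m,m'])`. -/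
def cocycleC {g : Type*} [LieRing g] [LieAlgebra ℂ g] (x y : g × g) : g × g :=
  (0, ⁅x.1, y.1⁆)

/-- for non-abelian `g`, the cocycle `c` is not a coboundary;
in particular `H²(g ⋊ g, g ⋊ g) ≠ 0`. -/
theorem cocycleC_not_coboundary {g : Type*} [LieRing g] [LieAlgebra ℂ g]
    [FiniteDimensional ℂ g] (hna : ∃ a b : g, ⁅a, b⁆ ≠ 0) :
    ¬ ∃ α : (g × g) →ₗ[ℂ] (g × g), ∀ x y : g × g,
      cocycleC x y =
        semidirectBracket x (α y) - semidirectBracket y (α x) - α (semidirectBracket x y) := by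
  rintro ⟨α, h⟩
  obtain ⟨a, b, hab⟩ := hna
  have := congrArg Prod.snd (h (a, 0) (b, 0))
  simp [cocycleC, semidirectBracket, Prod.ext_iff, Prod.mk_zero_zero] at this
  exact hab this
end

section
/- A linear map D on the direct product Lie algebra g⊕g, written in block matrix form D = (D1 D2; D3 D4), is a derivation if and only if D1 and D4 are derivations of g and D2, D3 are linear maps g→g that vanish on [g,g] and take values in the center Z(g). -/
/-- The direct product bracket on `g ⊕ g`. -/
def directBracket {g : Type*} [LieRing g] [LieAlgebra ℂ g] (x y : g × g) : g × g :=
  (⁅x.1, y.1⁆, ⁅x.2, y.2⁆)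

/-- A linear map on `g ⊕ g` given in block matrix form `(D1 D2; D3 D4)`. -/
def blockMap {g : Type*} [LieRing g] [LieAlgebra ℂ g]
    (D1 D2 D3 D4 : g →ₗ[ℂ] g) (p : g × g) : g × g :=
  (D1 p.1 + D2 p.2, D3 p.1 + D4 p.2)

/-- `(D1 D2; D3 D4)` is a derivation of the direct product Lie
algebra `g ⊕ g` iff `D1, D4` are derivations of `g` and `D2, D3` vanish on
`[g,g]` and take values in the center `Z(g)`. -/
theorem derivation_direct_product_iff {g : Type*} [LieRing g] [LieAlgebra ℂ g]
    [FiniteDimensional ℂ g] (D1 D2 D3 D4 : g →ₗ[ℂ] g) :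
    (∀ x y : g × g,
        blockMap D1 D2 D3 D4 (directBracket x y) =
          directBracket (blockMap D1 D2 D3 D4 x) y +
            directBracket x (blockMap D1 D2 D3 D4 y)) ↔
      ((∀ x y : g, D1 ⁅x, y⁆ = ⁅D1 x, y⁆ + ⁅x, D1 y⁆) ∧
        (∀ x y : g, D4 ⁅x, y⁆ = ⁅D4 x, y⁆ + ⁅x, D4 y⁆) ∧
        (∀ x y : g, D2 ⁅x, y⁆ = 0) ∧ (∀ x z : g, ⁅x, D2 z⁆ = 0) ∧
        (∀ x y : g, D3 ⁅x, y⁆ = 0) ∧ (∀ x z : g, ⁅x, D3 z⁆ = 0)) := by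
  constructor
  · intro h
    refine ⟨?_, ?_, ?_, ?_, ?_, ?_⟩
    · intro x y
      have := h (x, 0) (y, 0)
      simpa [blockMap, directBracket, Prod.ext_iff] using congrArg Prod.fst this
    · intro x y
      have := h (0, x) (0, y)
      simpa [blockMap, directBracket, Prod.ext_iff] using congrArg Prod.snd this
    · intro x y
      have := h (0, x) (0, y)
      simpa [blockMap, directBracket, Prod.ext_iff] using congrArg Prod.fst this
    · intro x z
      have := h (x, 0) (0, z)
      simpa [blockMap, directBracket, Prod.ext_iff] using (congrArg Prod.fst this).symm
    · intro x y
      have := h (x, 0) (y, 0)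
      simpa [blockMap, directBracket, Prod.ext_iff] using congrArg Prod.snd this
    · intro x z
      have := h (0, x) (z, 0)
      simpa [blockMap, directBracket, Prod.ext_iff] using (congrArg Prod.snd this).symm
  · rintro ⟨h1, h4, h2, h2', h3, h3'⟩ x y
    have h2'' : ∀ x z : g, ⁅D2 z, x⁆ = 0 := fun x z => by
      rw [← lie_skew, h2' x z, neg_zero]
    have h3'' : ∀ x z : g, ⁅D3 z, x⁆ = 0 := fun x z => by
      rw [← lie_skew, h3' x z, neg_zero]
    simp [blockMap, directBracket, Prod.ext_iff, h1, h4, h2, h2', h3, h3', h2'', h3'',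
      add_lie, lie_add]
end

section
/- A linear map D on the semi-direct product Lie algebra g⋊g, written in block form D = (D1 D2; D3 D4), is a derivation if and only if: D2 and D4 are derivations of g, D3 vanishes on [g,g] and takes values in Z(g), and D1([x,y]) = [D4(x),y] + [x,D1(y)] for all x,y in g. -/
/-- `(D1 D2; D3 D4)` is a derivation of the semi-direct product
Lie algebra `g ⋊ g` iff `D2, D4` are derivations of `g`, `D3` vanishes on
`[g,g]` with values in `Z(g)`, and `D1[x,y] = [D4 x, y] + [x, D1 y]`. -/
theorem derivation_semidirect_product_iff {g : Type*} [LieRing g] [LieAlgebra ℂ g]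
    [FiniteDimensional ℂ g] (D1 D2 D3 D4 : g →ₗ[ℂ] g) :
    (∀ x y : g × g,
        blockMap D1 D2 D3 D4 (semidirectBracket x y) =
          semidirectBracket (blockMap D1 D2 D3 D4 x) y +
            semidirectBracket x (blockMap D1 D2 D3 D4 y)) ↔
      ((∀ x y : g, D2 ⁅x, y⁆ = ⁅D2 x, y⁆ + ⁅x, D2 y⁆) ∧
        (∀ x y : g, D4 ⁅x, y⁆ = ⁅D4 x, y⁆ + ⁅x, D4 y⁆) ∧
        (∀ x y : g, D3 ⁅x, y⁆ = 0) ∧ (∀ x z : g, ⁅x, D3 z⁆ = 0) ∧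
        (∀ x y : g, D1 ⁅x, y⁆ = ⁅D4 x, y⁆ + ⁅x, D1 y⁆)) := by
  constructor
  · intro h
    have t1 : ∀ x y : g, (0:g) = ⁅D3 x, y⁆ + ⁅x, D3 y⁆ := by
      intro x y
      have := h (x, 0) (y, 0)
      simpa [blockMap, semidirectBracket, Prod.ext_iff, sub_eq_zero] using this
    have t2 : ∀ x y : g, D1 ⁅x, y⁆ = ⁅D1 x, y⁆ + ⁅x, D4 y⁆ ∧ D3 ⁅x, y⁆ = ⁅D3 x, y⁆ := by
      intro x y
      have := h (x, 0) (0, y)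
      simpa [blockMap, semidirectBracket, Prod.ext_iff] using this
    have t3 : ∀ x y : g, D2 ⁅x, y⁆ = ⁅D2 x, y⁆ + ⁅x, D2 y⁆ ∧
        D4 ⁅x, y⁆ = ⁅D4 x, y⁆ + ⁅x, D4 y⁆ := by
      intro x y
      have := h (0, x) (0, y)
      simpa [blockMap, semidirectBracket, Prod.ext_iff] using this
    have k1 : ∀ x y : g, D3 ⁅x, y⁆ = ⁅x, D3 y⁆ := by
      intro x y
      rw [← lie_skew x y, map_neg, (t2 y x).2, lie_skew]
    have hD3 : ∀ x y : g, D3 ⁅x, y⁆ = 0 := by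
      intro x y
      linear_combination (norm := module) ((2:ℂ)⁻¹) • (t2 x y).2 + ((2:ℂ)⁻¹) • k1 x y
        - ((2:ℂ)⁻¹) • t1 x y
    have hZ : ∀ x z : g, ⁅x, D3 z⁆ = 0 := by
      intro x z
      linear_combination (norm := module) - t1 x z + (t2 x z).2 - hD3 x z
    refine ⟨fun x y => (t3 x y).1, fun x y => (t3 x y).2, hD3, hZ, ?_⟩
    intro x y
    rw [← lie_skew x y, map_neg, (t2 y x).1, neg_add, lie_skew, lie_skew, add_comm]
  · rintro ⟨h2, h4, h3, hz, h1⟩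
    have h2' : ∀ a b : g, D2 ⁅a, b⁆ = ⁅a, D2 b⁆ - ⁅b, D2 a⁆ := by
      intro a b
      rw [h2, sub_eq_add_neg, lie_skew, add_comm]
    intro x y
    have hz' : ∀ a b : g, ⁅D3 b, a⁆ = 0 := by
      intro a b; rw [← neg_eq_zero, lie_skew, hz]
    simp only [blockMap, semidirectBracket, Prod.ext_iff, Prod.fst_add, Prod.snd_add,
      map_sub, map_add, add_lie, lie_add, sub_lie, lie_sub, h1, h2', h3, h4, hz, hz']
    constructor <;> abel
end

section
/- If g is a 2-step nilpotent Lie algebra, then the center of the deformed Lie algebra g ×^ad_t Der(g) is zero; consequently g ×^ad_t Der(g) is not isomorphic to the direct product Lie algebra g ⊕ Der(g) when g is nonzero. -/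
/-- The deformed bracket of the crossed module `ad : g → Der(g)`. -/
noncomputable def adDeformedBracket {g : Type*} [LieRing g] [LieAlgebra ℂ g] (t : ℂ)
    (p q : g × LieDerivation ℂ g g) : g × LieDerivation ℂ g g :=
  (p.2 q.1 - q.2 p.1, ⁅p.2, q.2⁆ + t • LieDerivation.ad ℂ g ⁅p.1, q.1⁆)

/-- The direct product bracket on `g ⊕ Der(g)`. -/
def adDirectBracket {g : Type*} [LieRing g] [LieAlgebra ℂ g]
    (p q : g × LieDerivation ℂ g g) : g × LieDerivation ℂ g g :=
  (⁅p.1, q.1⁆, ⁅p.2, q.2⁆)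

/-- for a nonzero 2-step nilpotent Lie algebra `g`, the center of
the deformed Lie algebra `g ×^ad_t Der(g)` is zero; consequently the deformed Lie
algebra is not isomorphic to the direct product `g ⊕ Der(g)`. -/
theorem two_step_nilpotent_deformed_center_zero {g : Type*} [LieRing g]
    [LieAlgebra ℂ g] [FiniteDimensional ℂ g] [Nontrivial g]
    (h2 : ∀ x y z : g, ⁅⁅x, y⁆, z⁆ = 0) (t : ℂ) (ht : t ≠ 0) :
    (∀ p : g × LieDerivation ℂ g g,
        (∀ q : g × LieDerivation ℂ g g, adDeformedBracket t p q = 0) → p = 0) ∧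
    ¬ ∃ e : (g × LieDerivation ℂ g g) ≃ₗ[ℂ] (g × LieDerivation ℂ g g),
        ∀ p q : g × LieDerivation ℂ g g,
          e (adDeformedBracket t p q) = adDirectBracket (e p) (e q) := by
  classical
  -- the span of brackets
  set C : Submodule ℂ g := Submodule.span ℂ {z : g | ∃ x y : g, ⁅x, y⁆ = z} with hCdef
  have hC : ∀ c ∈ C, ∀ y : g, ⁅c, y⁆ = 0 := by
    intro c hc
    refine Submodule.span_induction ?_ ?_ ?_ ?_ hc
    · rintro _ ⟨x, y, rfl⟩ w; exact h2 x y w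
    · intro y; simp
    · intro a b _ _ ha hb y; rw [add_lie, ha, hb, add_zero]
    · intro r a _ ha y; rw [smul_lie, ha, smul_zero]
  have hmemC : ∀ x y : g, ⁅x, y⁆ ∈ C := fun x y =>
    Submodule.subset_span ⟨x, y, rfl⟩
  obtain ⟨V, hV⟩ := Submodule.exists_isCompl C
  let π : g →ₗ[ℂ] g := C.subtype ∘ₗ (C.projectionOnto V hV)
  have hπmem : ∀ x : g, π x ∈ C := fun x => (C.projectionOnto V hV x).2
  have hπC : ∀ c ∈ C, π c = c := by
    intro c hc
    have := Submodule.linearProjOfIsCompl_apply_left hV ⟨c, hc⟩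
    simp only [π, LinearMap.comp_apply, Submodule.coe_subtype]
    rw [show ((⟨c, hc⟩ : C) : g) = c from rfl] at this
    rw [this]
  -- the invertible derivation
  have hlie0 : ∀ (a : g) (c : g), c ∈ C → ⁅a, c⁆ = 0 := by
    intro a c hc
    rw [← lie_skew, hC c hc a, neg_zero]
  let D0 : LieDerivation ℂ g g :=
    { toLinearMap := LinearMap.id + π
      leibniz' := by
        intro a b
        have h1 : π ⁅a, b⁆ = ⁅a, b⁆ := hπC _ (hmemC a b)
        have h2a : ⁅a, π b⁆ = 0 := hlie0 a _ (hπmem b)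
        have h2b : ⁅b, π a⁆ = 0 := hlie0 b _ (hπmem a)
        simp only [LinearMap.add_apply, LinearMap.id_apply, lie_add, h1, h2a, h2b,
          add_zero]
        rw [← lie_skew b a]
        abel }
  have hD0apply : ∀ x : g, D0 x = x + π x := fun x => rfl
  have hD0inj : ∀ x : g, D0 x = 0 → x = 0 := by
    intro x hx
    rw [hD0apply] at hx
    have h2' : π x + π (π x) = 0 := by
      have := congrArg π hx
      simpa [map_add] using this
    rw [hπC _ (hπmem x)] at h2'
    have hπx : π x = 0 := by
      have h3 : (2 : ℂ) • π x = 0 := by rw [two_smul]; exact h2'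
      simpa using h3
    rw [hπx, add_zero] at hx
    exact hx
  -- Part 1
  have part1 : ∀ p : g × LieDerivation ℂ g g,
      (∀ q : g × LieDerivation ℂ g g, adDeformedBracket t p q = 0) → p = 0 := by
    intro p hp
    obtain ⟨h, D⟩ := p
    have hD : D = 0 := by
      ext h'
      have := hp (h', 0)
      simp only [adDeformedBracket, Prod.ext_iff, Prod.fst_zero, Prod.snd_zero] at this
      simpa using this.1
    have hh : h = 0 := by
      have := hp (0, D0)
      simp only [adDeformedBracket, Prod.ext_iff, Prod.fst_zero, Prod.snd_zero] at this
      have h1 := this.1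
      simp only [map_zero] at h1
      have : D0 h = 0 := by
        have := h1
        simpa [sub_eq_zero] using this.symm
      exact hD0inj h this
    simp [hh, hD]
  refine ⟨part1, ?_⟩
  rintro ⟨e, he⟩
  -- a nonzero central element of g
  obtain ⟨z, hz0, hzc⟩ : ∃ z : g, z ≠ 0 ∧ ∀ y : g, ⁅z, y⁆ = 0 := by
    by_cases hab : ∀ x y : g, ⁅x, y⁆ = 0
    · obtain ⟨z, hz⟩ := exists_ne (0 : g)
      exact ⟨z, hz, fun y => hab z y⟩
    · push_neg at hab
      obtain ⟨x, y, hxy⟩ := hab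
      exact ⟨⁅x, y⁆, hxy, fun w => h2 x y w⟩
  set p0 : g × LieDerivation ℂ g g := e.symm (z, 0) with hp0
  have hcomm : ∀ q : g × LieDerivation ℂ g g, adDeformedBracket t p0 q = 0 := by
    intro q
    have h1 : e (adDeformedBracket t p0 q) = adDirectBracket (e p0) (e q) := he p0 q
    rw [hp0, e.apply_symm_apply] at h1
    have h2' : adDirectBracket ((z, 0) : g × LieDerivation ℂ g g) (e q) = 0 := by
      simp [adDirectBracket, hzc, Prod.ext_iff]
    rw [h2'] at h1
    exact e.injective (by rw [h1, map_zero])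
  have : p0 = 0 := part1 p0 hcomm
  have hz' : ((z, 0) : g × LieDerivation ℂ g g) = 0 := by
    rw [← e.apply_symm_apply (z, 0), ← hp0, this, map_zero]
  exact hz0 (congrArg Prod.fst hz')
end

section
/- For a crossed module μ: h → g, the derived ideal of the deformed Lie algebra h ×^μ_t g (t ≠ 0) equals O ⊕ [g,g], where O is the subspace of h spanned by {g·h : g ∈ g, h ∈ h}. -/
section

variable {h g : Type*} [LieRing h] [LieAlgebra ℂ h] [LieRing g] [LieAlgebra ℂ g]
  [LieRingModule g h] [LieModule ℂ g h]

/-- The deformed bracket `[(h,g),(h',g')]_t = (g·h' - g'·h, [g,g'] + t μ[h,h'])`. -/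
def deformedBracket (μ : h →ₗ⁅ℂ⁆ g) (t : ℂ) (x y : h × g) : h × g :=
  (⁅x.2, y.1⁆ - ⁅y.2, x.1⁆, ⁅x.2, y.2⁆ + t • μ ⁅x.1, y.1⁆)

/-- the derived ideal of the deformed Lie algebra `h ×^μ_t g`
(`t ≠ 0`) equals `O ⊕ [g,g]`, where `O ⊆ h` is the span of `{g·h}` and `[g,g]`
is the span of brackets of `g`. -/
theorem derived_ideal_of_deformed (μ : h →ₗ⁅ℂ⁆ g)
    (hder : ∀ (x : g) (a b : h), ⁅x, ⁅a, b⁆⁆ = ⁅⁅x, a⁆, b⁆ + ⁅a, ⁅x, b⁆⁆)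
    (hcm1 : ∀ (x : g) (a : h), μ ⁅x, a⁆ = ⁅x, μ a⁆)
    (hcm2 : ∀ a b : h, ⁅μ a, b⁆ = ⁅a, b⁆)
    (t : ℂ) (ht : t ≠ 0) :
    Submodule.span ℂ {z : h × g | ∃ x y : h × g, z = deformedBracket μ t x y} =
      (Submodule.span ℂ {a : h | ∃ (x : g) (b : h), a = ⁅x, b⁆}).prod
        (Submodule.span ℂ {c : g | ∃ x y : g, c = ⁅x, y⁆}) := by
  apply le_antisymm
  · rw [Submodule.span_le]
    rintro z ⟨x, y, rfl⟩
    simp only [SetLike.mem_coe, Submodule.mem_prod]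
    constructor
    · exact sub_mem (Submodule.subset_span ⟨x.2, y.1, rfl⟩)
        (Submodule.subset_span ⟨y.2, x.1, rfl⟩)
    · refine add_mem (Submodule.subset_span ⟨x.2, y.2, rfl⟩)
        (Submodule.smul_mem _ _ (Submodule.subset_span ⟨μ x.1, μ y.1, ?_⟩))
      rw [← hcm1, hcm2]
  · rintro ⟨a, c⟩ hac
    rw [Submodule.mem_prod] at hac
    have key : ((a, c) : h × g) = (a, 0) + (0, c) := by simp
    rw [key]
    refine add_mem ?_ ?_
    · have : (a, (0 : g)) ∈ Submodule.map (LinearMap.inl ℂ h g)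
          (Submodule.span ℂ {a : h | ∃ (x : g) (b : h), a = ⁅x, b⁆}) :=
        ⟨a, hac.1, rfl⟩
      have hle : Submodule.map (LinearMap.inl ℂ h g)
          (Submodule.span ℂ {a : h | ∃ (x : g) (b : h), a = ⁅x, b⁆}) ≤
          Submodule.span ℂ {z : h × g | ∃ x y : h × g, z = deformedBracket μ t x y} := by
        rw [Submodule.map_span, Submodule.span_le]
        rintro w ⟨_, ⟨x, b, rfl⟩, rfl⟩
        refine Submodule.subset_span ⟨(0, x), (b, 0), ?_⟩
        simp [deformedBracket]
      exact hle this
    · have : ((0 : h), c) ∈ Submodule.map (LinearMap.inr ℂ h g)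
          (Submodule.span ℂ {c : g | ∃ x y : g, c = ⁅x, y⁆}) :=
        ⟨c, hac.2, rfl⟩
      have hle : Submodule.map (LinearMap.inr ℂ h g)
          (Submodule.span ℂ {c : g | ∃ x y : g, c = ⁅x, y⁆}) ≤
          Submodule.span ℂ {z : h × g | ∃ x y : h × g, z = deformedBracket μ t x y} := by
        rw [Submodule.map_span, Submodule.span_le]
        rintro w ⟨_, ⟨x, y, rfl⟩, rfl⟩
        refine Submodule.subset_span ⟨(0, x), (0, y), ?_⟩
        simp [deformedBracket]
      exact hle this

end
end

section
/- For a crossed module μ: h → g, the deformed Lie algebra h ×^μ_t g is solvable if and only if g is solvable. -/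
section

variable {h g : Type*} [LieRing h] [LieAlgebra ℂ h] [LieRing g] [LieAlgebra ℂ g]
  [LieRingModule g h] [LieModule ℂ g h]

/-- The derived series of the deformed Lie algebra `h ×^μ_t g`, as submodules. -/
def deformedDerivedSeries (μ : h →ₗ⁅ℂ⁆ g) (t : ℂ) : ℕ → Submodule ℂ (h × g)
  | 0 => ⊤
  | n + 1 => Submodule.span ℂ
      {z : h × g | ∃ x ∈ deformedDerivedSeries μ t n, ∃ y ∈ deformedDerivedSeries μ t n,
        z = deformedBracket μ t x y}

private lemma derSer_succ (k : ℕ) :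
    LieAlgebra.derivedSeries ℂ g (k + 1) =
      ⁅LieAlgebra.derivedSeries ℂ g k, LieAlgebra.derivedSeries ℂ g k⁆ := by
  simp [LieAlgebra.derivedSeries_def, LieAlgebra.derivedSeriesOfIdeal_succ]

/-- Forward auxiliary: `0 × derivedSeries g n ⊆ deformedDerivedSeries n`. -/
private lemma aux_fwd (μ : h →ₗ⁅ℂ⁆ g) (t : ℂ) :
    ∀ n : ℕ, ∀ x : g, x ∈ LieAlgebra.derivedSeries ℂ g n →
      ((0 : h), x) ∈ deformedDerivedSeries μ t n := by
  intro n
  induction n with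
  | zero => intro x _; exact Submodule.mem_top
  | succ k ih =>
    intro x hx
    rw [derSer_succ, ← LieSubmodule.mem_toSubmodule,
      LieSubmodule.lieIdeal_oper_eq_linear_span'] at hx
    refine Submodule.span_induction (p := fun x _ => ((0 : h), x) ∈ deformedDerivedSeries μ t (k + 1))
      ?_ ?_ ?_ ?_ hx
    · rintro z ⟨a, ha, b, hb, rfl⟩
      apply Submodule.subset_span
      refine ⟨((0 : h), a), ih a ha, ((0 : h), b), ih b hb, ?_⟩
      simp [deformedBracket]
    · exact Submodule.zero_mem _
    · intro a b _ _ hpa hpb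
      have := Submodule.add_mem _ hpa hpb
      simpa using this
    · intro c a _ hpa
      have := Submodule.smul_mem _ c hpa
      simpa using this

/-- Backward auxiliary: both components land in the derived series of `g`. -/
private lemma aux_bwd (μ : h →ₗ⁅ℂ⁆ g) (t : ℂ)
    (hcm1 : ∀ (x : g) (a : h), μ ⁅x, a⁆ = ⁅x, μ a⁆)
    (hcm2 : ∀ a b : h, ⁅μ a, b⁆ = ⁅a, b⁆) :
    ∀ n : ℕ, ∀ z ∈ deformedDerivedSeries μ t n,
      z.2 ∈ LieAlgebra.derivedSeries ℂ g n ∧ μ z.1 ∈ LieAlgebra.derivedSeries ℂ g n := by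
  have hmu : ∀ a b : h, μ ⁅a, b⁆ = ⁅μ a, μ b⁆ := by
    intro a b
    rw [← hcm2 a b, hcm1]
  intro n
  induction n with
  | zero =>
    intro z _
    exact ⟨LieSubmodule.mem_top _, LieSubmodule.mem_top _⟩
  | succ k ih =>
    intro z hz
    rw [derSer_succ]
    refine Submodule.span_induction (p := fun z _ =>
      z.2 ∈ ⁅LieAlgebra.derivedSeries ℂ g k, LieAlgebra.derivedSeries ℂ g k⁆ ∧
      μ z.1 ∈ ⁅LieAlgebra.derivedSeries ℂ g k, LieAlgebra.derivedSeries ℂ g k⁆) ?_ ?_ ?_ ?_ hz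
    · rintro w ⟨x, hx, y, hy, rfl⟩
      obtain ⟨hx2, hx1⟩ := ih x hx
      obtain ⟨hy2, hy1⟩ := ih y hy
      constructor
      · show ⁅x.2, y.2⁆ + t • μ ⁅x.1, y.1⁆ ∈ _
        refine add_mem (LieSubmodule.lie_mem_lie hx2 hy2) ?_
        rw [hmu]
        exact Submodule.smul_mem _ t (LieSubmodule.lie_mem_lie hx1 hy1)
      · show μ (⁅x.2, y.1⁆ - ⁅y.2, x.1⁆) ∈ _
        rw [map_sub, hcm1, hcm1]
        exact sub_mem (LieSubmodule.lie_mem_lie hx2 hy1)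
          (LieSubmodule.lie_mem_lie hy2 hx1)
    · simp
    · intro a b _ _ hpa hpb
      exact ⟨by simpa using add_mem hpa.1 hpb.1, by simpa using add_mem hpa.2 hpb.2⟩
    · intro c a _ hpa
      refine ⟨by simpa using Submodule.smul_mem _ c hpa.1, ?_⟩
      simpa using Submodule.smul_mem _ c hpa.2

/-- the deformed Lie algebra `h ×^μ_t g` is solvable (its derived
series terminates at zero) if and only if `g` is solvable. -/
theorem deformed_solvable_iff (μ : h →ₗ⁅ℂ⁆ g)
    [FiniteDimensional ℂ h] [FiniteDimensional ℂ g]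
    (hder : ∀ (x : g) (a b : h), ⁅x, ⁅a, b⁆⁆ = ⁅⁅x, a⁆, b⁆ + ⁅a, ⁅x, b⁆⁆)
    (hcm1 : ∀ (x : g) (a : h), μ ⁅x, a⁆ = ⁅x, μ a⁆)
    (hcm2 : ∀ a b : h, ⁅μ a, b⁆ = ⁅a, b⁆)
    (t : ℂ) (ht : t ≠ 0) :
    (∃ n : ℕ, deformedDerivedSeries μ t n = ⊥) ↔ LieAlgebra.IsSolvable g := by
  constructor
  · rintro ⟨n, hn⟩
    refine (LieAlgebra.isSolvable_iff ℂ g).mpr ⟨n, ?_⟩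
    rw [eq_bot_iff]
    intro x hx
    have := aux_fwd μ t n x hx
    rw [hn, Submodule.mem_bot, Prod.ext_iff] at this
    simpa using this.2
  · intro hs
    obtain ⟨k, hk⟩ := (LieAlgebra.isSolvable_iff ℂ g).mp hs
    refine ⟨k + 1, ?_⟩
    rw [deformedDerivedSeries, eq_bot_iff, Submodule.span_le]
    rintro z ⟨x, hx, y, hy, rfl⟩
    obtain ⟨hx2, hx1⟩ := aux_bwd μ t hcm1 hcm2 k x hx
    obtain ⟨hy2, hy1⟩ := aux_bwd μ t hcm1 hcm2 k y hy
    rw [hk, LieSubmodule.mem_bot] at hx2 hx1 hy2 hy1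
    have hmu : μ ⁅x.1, y.1⁆ = ⁅μ x.1, μ y.1⁆ := by rw [← hcm2 x.1 y.1, hcm1]
    simp [deformedBracket, hx2, hx1, hy2, hy1, hmu, Prod.ext_iff]
end
end
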